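/- arXiv:math/0409491 — 3 statements merged into one kernel-verified Lean document; each statement's English description precedes it below -/
import Mathlib

section
/- Fix 0 < a < b < ∞. For all u, v ∈ [a,b]^N, (a^{N−1}/√N)·‖u−v‖ ≤ (∏_{j=1}^N u_j) + (∏_{j=1}^N v_j) − 2·∏_{j=1}^N min(u_j,v_j) ≤ N·b^{N−1}·‖u−v‖. -/
open scoped BigOperators

lemma tele_bound (a b : ℝ) (ha : 0 < a) (hab : a ≤ b) :
    ∀ (n : ℕ) (u w : Fin (n+1) → ℝ), (∀ i, a ≤ w i) → (∀ i, w i ≤ u i) → (∀ i, u i ≤ b) →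
      a ^ n * ∑ i, (u i - w i) ≤ ∏ i, u i - ∏ i, w i ∧
      ∏ i, u i - ∏ i, w i ≤ b ^ n * ∑ i, (u i - w i) := by
  intro n
  induction n with
  | zero =>
    intro u w hw hwu hub
    simp
  | succ n ih =>
    intro u w hw hwu hub
    have hIH := ih (fun i => u i.succ) (fun i => w i.succ)
      (fun i => hw _) (fun i => hwu _) (fun i => hub _)
    set S := ∑ i : Fin (n+1), (u i.succ - w i.succ) with hS
    have hS0 : 0 ≤ S := Finset.sum_nonneg fun i _ => by linarith [hwu i.succ]
    have hprodw_lb : a ^ (n+1) ≤ ∏ i : Fin (n+1), w i.succ := by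
      have := Finset.prod_le_prod (s := Finset.univ) (f := fun _ : Fin (n+1) => a)
        (g := fun i => w i.succ) (fun i _ => ha.le) (fun i _ => hw _)
      simpa using this
    have hprodw_ub : ∏ i : Fin (n+1), w i.succ ≤ b ^ (n+1) := by
      have := Finset.prod_le_prod (s := Finset.univ) (f := fun i => w i.succ)
        (g := fun _ : Fin (n+1) => b)
        (fun i _ => le_trans ha.le (hw _)) (fun i _ => le_trans (hwu _) (hub _))
      simpa using this
    have hdiff_nn : 0 ≤ ∏ i : Fin (n+1), u i.succ - ∏ i : Fin (n+1), w i.succ := by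
      have := hIH.1
      nlinarith [pow_pos ha n]
    have ha0 : a ≤ u 0 := le_trans (hw 0) (hwu 0)
    have hb0 : u 0 ≤ b := hub 0
    rw [Fin.prod_univ_succ u, Fin.prod_univ_succ w, Fin.sum_univ_succ]
    constructor
    · have h1 : a * (a ^ n * S) ≤ u 0 * (∏ i : Fin (n+1), u i.succ - ∏ i : Fin (n+1), w i.succ) := by
        nlinarith [hIH.1, pow_pos ha n]
      have h2 : (u 0 - w 0) * a ^ (n+1) ≤ (u 0 - w 0) * ∏ i : Fin (n+1), w i.succ :=
        mul_le_mul_of_nonneg_left hprodw_lb (by linarith [hwu 0])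
      calc a ^ (n+1) * ((u 0 - w 0) + S)
          = (u 0 - w 0) * a ^ (n+1) + a * (a ^ n * S) := by ring
        _ ≤ (u 0 - w 0) * ∏ i : Fin (n+1), w i.succ
            + u 0 * (∏ i : Fin (n+1), u i.succ - ∏ i : Fin (n+1), w i.succ) := by linarith
        _ = u 0 * ∏ i : Fin (n+1), u i.succ - w 0 * ∏ i : Fin (n+1), w i.succ := by ring
    · have hb : 0 < b := lt_of_lt_of_le ha hab
      have h1 : u 0 * (∏ i : Fin (n+1), u i.succ - ∏ i : Fin (n+1), w i.succ) ≤ b * (b ^ n * S) := by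
        nlinarith [hIH.2, pow_pos hb n]
      have h2 : (u 0 - w 0) * ∏ i : Fin (n+1), w i.succ ≤ (u 0 - w 0) * b ^ (n+1) :=
        mul_le_mul_of_nonneg_left hprodw_ub (by linarith [hwu 0])
      calc u 0 * ∏ i : Fin (n+1), u i.succ - w 0 * ∏ i : Fin (n+1), w i.succ
          = (u 0 - w 0) * ∏ i : Fin (n+1), w i.succ
            + u 0 * (∏ i : Fin (n+1), u i.succ - ∏ i : Fin (n+1), w i.succ) := by ring
        _ ≤ (u 0 - w 0) * b ^ (n+1) + b * (b ^ n * S) := by linarith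
        _ = b ^ (n+1) * ((u 0 - w 0) + S) := by ring

theorem stmt_3 (N : ℕ) (hN : 1 ≤ N) (a b : ℝ) (ha : 0 < a) (hab : a < b)
    (u v : EuclideanSpace ℝ (Fin N))
    (hu : ∀ j, u j ∈ Set.Icc a b) (hv : ∀ j, v j ∈ Set.Icc a b) :
    a ^ (N - 1) / Real.sqrt N * ‖u - v‖ ≤
      (∏ j, u j) + (∏ j, v j) - 2 * ∏ j, min (u j) (v j) ∧
    (∏ j, u j) + (∏ j, v j) - 2 * (∏ j, min (u j) (v j)) ≤
      (N : ℝ) * b ^ (N - 1) * ‖u - v‖ := by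
  obtain ⟨n, rfl⟩ : ∃ n, N = n + 1 := ⟨N - 1, (Nat.succ_pred_eq_of_pos hN).symm⟩
  have hn1 : n + 1 - 1 = n := rfl
  set w : Fin (n+1) → ℝ := fun j => min (u j) (v j) with hwdef
  have hw : ∀ i, a ≤ w i := fun i => le_min (hu i).1 (hv i).1
  have hwu : ∀ i, w i ≤ u i := fun i => min_le_left _ _
  have hwv : ∀ i, w i ≤ v i := fun i => min_le_right _ _
  have hub : ∀ i, u i ≤ b := fun i => (hu i).2
  have hvb : ∀ i, v i ≤ b := fun i => (hv i).2
  have hU := tele_bound a b ha hab.le n u w hw hwu hub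
  have hV := tele_bound a b ha hab.le n v w hw hwv hvb
  have habs : ∀ i : Fin (n+1), (u i - w i) + (v i - w i) = |u i - v i| := by
    intro i
    rcases le_total (u i) (v i) with h | h
    · rw [abs_of_nonpos (by linarith)]; simp [hwdef, min_eq_left h]
    · rw [abs_of_nonneg (by linarith)]; simp [hwdef, min_eq_right h]
  set T := ∑ i : Fin (n+1), |u i - v i| with hT
  have hsum : (∑ i, (u i - w i)) + (∑ i, (v i - w i)) = T := by
    rw [← Finset.sum_add_distrib]
    exact Finset.sum_congr rfl fun i _ => habs i
  -- norm facts
  have hnorm : ‖u - v‖ = Real.sqrt (∑ i, (u i - v i) ^ 2) := by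
    rw [EuclideanSpace.norm_eq]
    congr 1
    exact Finset.sum_congr rfl fun i _ => by
      simp [Real.norm_eq_abs, sq_abs]
  have hl2l1 : ‖u - v‖ ≤ T := by
    rw [hnorm]
    have h1 : (∑ i, (u i - v i) ^ 2) ≤ T ^ 2 := by
      rw [hT]
      calc (∑ i, (u i - v i) ^ 2) = ∑ i, |u i - v i| ^ 2 := by
            exact Finset.sum_congr rfl fun i _ => (sq_abs _).symm
        _ ≤ (∑ i, |u i - v i|) ^ 2 :=
            Finset.sum_sq_le_sq_sum_of_nonneg fun i _ => abs_nonneg _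
    have hT0 : 0 ≤ T := Finset.sum_nonneg fun i _ => abs_nonneg _
    calc Real.sqrt (∑ i, (u i - v i) ^ 2) ≤ Real.sqrt (T ^ 2) := Real.sqrt_le_sqrt h1
      _ = T := Real.sqrt_sq hT0
  have hcoord : ∀ i : Fin (n+1), |u i - v i| ≤ ‖u - v‖ := by
    intro i
    rw [hnorm]
    have : |u i - v i| = Real.sqrt ((u i - v i) ^ 2) := (Real.sqrt_sq_eq_abs _).symm
    rw [this]
    exact Real.sqrt_le_sqrt (Finset.single_le_sum (f := fun j => (u j - v j) ^ 2) (fun j _ => sq_nonneg _) (Finset.mem_univ i))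
  have hl1Nl2 : T ≤ (n + 1 : ℝ) * ‖u - v‖ := by
    calc T ≤ ∑ _i : Fin (n+1), ‖u - v‖ := Finset.sum_le_sum fun i _ => hcoord i
      _ = (n + 1 : ℝ) * ‖u - v‖ := by simp [Finset.sum_const]
  have hQ : (∏ j, u j) + (∏ j, v j) - 2 * (∏ j, w j)
      = (∏ j, u j - ∏ j, w j) + (∏ j, v j - ∏ j, w j) := by ring
  have hsqrtN1 : 1 ≤ Real.sqrt ((n:ℝ) + 1) := by
    calc (1:ℝ) = Real.sqrt 1 := by simp
      _ ≤ _ := Real.sqrt_le_sqrt (by linarith [Nat.cast_nonneg (α := ℝ) n])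
  have hsqrtpos : 0 < Real.sqrt ((n:ℝ) + 1) := lt_of_lt_of_le one_pos hsqrtN1
  have han : 0 < a ^ n := pow_pos ha n
  have hbn : 0 < b ^ n := pow_pos (lt_trans ha hab) n
  constructor
  · rw [hn1, hQ]
    have hlow : a ^ n * T ≤ (∏ j, u j - ∏ j, w j) + (∏ j, v j - ∏ j, w j) := by
      rw [← hsum]
      nlinarith [hU.1, hV.1]
    have h1 : a ^ n / Real.sqrt ((n:ℝ) + 1) * ‖u - v‖ ≤ a ^ n * ‖u - v‖ := by
      apply mul_le_mul_of_nonneg_right _ (norm_nonneg _)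
      rw [div_le_iff₀ hsqrtpos]
      nlinarith [hsqrtN1, han]
    have h2 : a ^ n * ‖u - v‖ ≤ a ^ n * T := mul_le_mul_of_nonneg_left hl2l1 han.le
    push_cast
    linarith
  · rw [hn1, hQ]
    have hhigh : (∏ j, u j - ∏ j, w j) + (∏ j, v j - ∏ j, w j) ≤ b ^ n * T := by
      rw [← hsum]
      nlinarith [hU.2, hV.2]
    have h2 : b ^ n * T ≤ b ^ n * ((n + 1 : ℝ) * ‖u - v‖) :=
      mul_le_mul_of_nonneg_left hl1Nl2 hbn.le
    push_cast
    linarith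
end

section
/- Let Y be a centered one-dimensional Gaussian random variable with variance σ² > 0, and let α, β > 0. If ε ≤ βσ then for every x with |x| ≤ ασ, P{|Y − x| ≤ ε} ≥ e^{−α²/2 − αβ}·P{|Y| ≤ ε}; if ε > βσ then P{|Y − x| ≤ ε} ≥ √(2/π)·β·e^{−(α+β)²/2}. -/
open MeasureTheory ProbabilityTheory
open scoped NNReal ENNReal

lemma aux_pdf_eq (σ : ℝ≥0) (hσ : 0 < σ) (y : ℝ) :
    gaussianPDFReal 0 (σ ^ 2) y
      = ((σ : ℝ) * Real.sqrt (2 * Real.pi))⁻¹ * Real.exp (- y ^ 2 / (2 * (σ : ℝ) ^ 2)) := by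
  have hs : (0:ℝ) < σ := hσ
  rw [gaussianPDFReal]
  have h2 : ((σ ^ 2 : ℝ≥0) : ℝ) = (σ:ℝ)^2 := by push_cast; ring
  rw [h2]
  have : Real.sqrt (2 * Real.pi * (σ:ℝ)^2) = (σ:ℝ) * Real.sqrt (2 * Real.pi) := by
    rw [Real.sqrt_mul (by positivity), Real.sqrt_sq hs.le]; ring
  rw [this]
  ring_nf

theorem stmt_10 (σ : ℝ≥0) (hσ : 0 < σ) (α β : ℝ) (hα : 0 < α) (hβ : 0 < β)
    (x : ℝ) (hx : |x| ≤ α * σ) (ε : ℝ) (hε : 0 < ε) :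
    (ε ≤ β * σ →
      ENNReal.ofReal (Real.exp (-α ^ 2 / 2 - α * β)) *
          gaussianReal 0 (σ ^ 2) {y : ℝ | |y| ≤ ε}
        ≤ gaussianReal 0 (σ ^ 2) {y : ℝ | |y - x| ≤ ε}) ∧
    (β * σ < ε →
      ENNReal.ofReal (Real.sqrt (2 / Real.pi) * β * Real.exp (-(α + β) ^ 2 / 2))
        ≤ gaussianReal 0 (σ ^ 2) {y : ℝ | |y - x| ≤ ε}) := by
  have hs : (0:ℝ) < σ := hσ
  have hv : (σ ^ 2 : ℝ≥0) ≠ 0 := by positivity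
  set f := gaussianPDFReal 0 (σ ^ 2) with hf
  have hfint : Integrable f := integrable_gaussianPDFReal 0 (σ ^ 2)
  have hfnn : ∀ y, 0 ≤ f y := gaussianPDFReal_nonneg 0 (σ ^ 2)
  have hset1 : {y : ℝ | |y| ≤ ε} = Set.Icc (-ε) ε := by
    ext y; simp [abs_le]
  have hset2 : {y : ℝ | |y - x| ≤ ε} = Set.Icc (x - ε) (x + ε) := by
    ext y; simp only [Set.mem_setOf_eq, abs_le, Set.mem_Icc]
    constructor <;> intro h <;> constructor <;> linarith [h.1, h.2]
  have hxl : -(α * σ) ≤ x := (abs_le.mp hx).1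
  have hxu : x ≤ α * σ := (abs_le.mp hx).2
  constructor
  · intro hεβ
    rw [hset1, hset2, gaussianReal_apply_eq_integral 0 hv, gaussianReal_apply_eq_integral 0 hv,
      ← ENNReal.ofReal_mul (Real.exp_nonneg _)]
    apply ENNReal.ofReal_le_ofReal
    have hle : -ε ≤ ε := by linarith
    have h1 : ∫ y in Set.Icc (x - ε) (x + ε), f y = ∫ y in Set.Icc (-ε) ε, f (y + x) := by
      rw [integral_Icc_eq_integral_Ioc, integral_Icc_eq_integral_Ioc,
        ← intervalIntegral.integral_of_le (by linarith : x - ε ≤ x + ε),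
        ← intervalIntegral.integral_of_le hle]
      rw [show x - ε = -ε + x by ring, show x + ε = ε + x by ring,
        ← intervalIntegral.integral_comp_add_right f x]
    rw [h1, ← integral_const_mul]
    apply setIntegral_mono_on
    · exact (hfint.const_mul _).restrict
    · exact (hfint.comp_add_right x).restrict
    · exact measurableSet_Icc
    · intro y hy
      obtain ⟨hy1, hy2⟩ := hy
      simp only [hf]
      rw [aux_pdf_eq σ hσ, aux_pdf_eq σ hσ, mul_comm (Real.exp _), mul_assoc,
        ← Real.exp_add]
      apply mul_le_mul_of_nonneg_left _ (by positivity)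
      apply Real.exp_le_exp.mpr
      have hσ2 : (0:ℝ) < (σ:ℝ) ^ 2 := by positivity
      rw [show -y ^ 2 / (2 * (σ:ℝ) ^ 2) + (-α ^ 2 / 2 - α * β)
          = (-(y ^ 2) - (α ^ 2 + 2 * (α * β)) * (σ:ℝ) ^ 2) / (2 * (σ:ℝ) ^ 2) by
        field_simp; ring]
      rw [div_le_div_iff₀ (by positivity) (by positivity)]
      have hy' : |y| ≤ β * σ := by
        rw [abs_le]; constructor <;> linarith
      have := abs_mul x y
      have habs : |x * y| ≤ (α * σ) * (β * σ) :=
        (abs_mul x y) ▸ mul_le_mul hx hy' (abs_nonneg _) (by positivity)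
      have hxy : x * y ≤ (α * σ) * (β * σ) := (abs_le.mp habs).2
      have hx2 : x ^ 2 ≤ (α * σ) ^ 2 := by
        rw [← sq_abs x]; exact pow_le_pow_left₀ (abs_nonneg _) hx 2
      have key : (y + x) ^ 2 ≤ y ^ 2 + (α ^ 2 + 2 * (α * β)) * (σ:ℝ) ^ 2 := by
        nlinarith
      nlinarith [mul_le_mul_of_nonneg_right key (by positivity : (0:ℝ) ≤ 2 * (σ:ℝ) ^ 2)]
  · intro hεβ
    rw [hset2]
    set s := (σ : ℝ) with hsdef
    set u := max (x - ε) (-((α + β) * s)) with hu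
    have hβs : β * s < ε := hεβ
    have hJsub : Set.Icc u (u + 2 * β * s) ⊆ Set.Icc (x - ε) (x + ε) := by
      apply Set.Icc_subset_Icc (le_max_left _ _)
      rw [hu]
      rcases max_cases (x - ε) (-((α + β) * s)) with ⟨h1, h2⟩ | ⟨h1, h2⟩ <;>
        rw [h1] <;> nlinarith
    have hJbd : ∀ y ∈ Set.Icc u (u + 2 * β * s), |y| ≤ (α + β) * s := by
      intro y hy
      obtain ⟨hy1, hy2⟩ := hy
      have hul : -((α + β) * s) ≤ u := le_max_right _ _
      have huu : u + 2 * β * s ≤ (α + β) * s := by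
        rw [hu]
        rcases max_cases (x - ε) (-((α + β) * s)) with ⟨h1, h2⟩ | ⟨h1, h2⟩ <;>
          rw [h1] <;> nlinarith
      rw [abs_le]; constructor <;> linarith
    calc ENNReal.ofReal (Real.sqrt (2 / Real.pi) * β * Real.exp (-(α + β) ^ 2 / 2))
        ≤ gaussianReal 0 (σ ^ 2) (Set.Icc u (u + 2 * β * s)) := by
          rw [gaussianReal_apply_eq_integral 0 hv]
          apply ENNReal.ofReal_le_ofReal
          have hc : ∀ y ∈ Set.Icc u (u + 2 * β * s),
              (s * Real.sqrt (2 * Real.pi))⁻¹ * Real.exp (-(α + β) ^ 2 / 2) ≤ f y := by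
            intro y hy
            simp only [hf]
            rw [aux_pdf_eq σ hσ]
            apply mul_le_mul_of_nonneg_left _ (by positivity)
            apply Real.exp_le_exp.mpr
            have hy' := hJbd y hy
            have hy2 : y ^ 2 ≤ ((α + β) * s) ^ 2 := by
              rw [← sq_abs y]; exact pow_le_pow_left₀ (abs_nonneg _) hy' 2
            rw [div_le_div_iff₀ (by norm_num) (by exact mul_pos two_pos (pow_pos hs 2))]
            nlinarith [hy2]
          have h2 : ∫ y in Set.Icc u (u + 2 * β * s),
              ((s * Real.sqrt (2 * Real.pi))⁻¹ * Real.exp (-(α + β) ^ 2 / 2)) ≤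
              ∫ y in Set.Icc u (u + 2 * β * s), f y :=
            setIntegral_mono_on ((integrableOn_const_iff).mpr (Or.inr (by
              rw [Real.volume_Icc]; exact ENNReal.ofReal_lt_top)))
              hfint.restrict measurableSet_Icc hc
          refine le_trans ?_ h2
          rw [setIntegral_const, Real.volume_real_Icc_of_le (by nlinarith), smul_eq_mul]
          have harea : u + 2 * β * s - u = 2 * β * s := by ring
          rw [harea]
          have hsp : (0:ℝ) < Real.sqrt (2 * Real.pi) := by positivity
          have key : Real.sqrt (2 / Real.pi) * Real.sqrt (2 * Real.pi) = 2 := by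
            rw [← Real.sqrt_mul (by positivity),
              show (2 / Real.pi) * (2 * Real.pi) = 4 by
                field_simp; ring,
              show (4:ℝ) = 2 ^ 2 by norm_num, Real.sqrt_sq (by norm_num)]
          have hsqrt : Real.sqrt (2 / Real.pi) = 2 / Real.sqrt (2 * Real.pi) := by
            rw [eq_div_iff hsp.ne']; exact key
          rw [hsqrt]
          apply le_of_eq
          field_simp
        _ ≤ gaussianReal 0 (σ ^ 2) (Set.Icc (x - ε) (x + ε)) := measure_mono hJsub
end

section
/- Let Z_1, …, Z_n be linearly independent centered real Gaussian random variables and g: R → R_+ Borel measurable. Then ∫_{R^n} g(v_1)·exp(−½ Var(v·Z)) dv = (2π)^{(n−1)/2}·Q^{−1/2}·∫_{−∞}^{∞} g(z/σ_1)·e^{−z²/2} dz, where σ_1² = Var(Z_1 | Z_2, …, Z_n) and Q = det Cov(Z_1, …, Z_n). -/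
open MeasureTheory ProbabilityTheory
open scoped BigOperators NNReal

section Helpers
open Matrix
open scoped MatrixOrder

private lemma lintegral_fin_prod' : ∀ {n : ℕ} (f : Fin n → ℝ → ENNReal), (∀ i, Measurable (f i)) →
    ∫⁻ x : Fin n → ℝ, ∏ i, f i (x i) = ∏ i, ∫⁻ t, f i t := by
  intro n
  induction n with
  | zero =>
    intro f _
    simp [lintegral_const, volume_pi]
  | succ n ih =>
    intro f hf
    have hmp := (measurePreserving_piFinSuccAbove (fun _ : Fin (n + 1) => (volume : Measure ℝ)) 0).symm
    have hFm : Measurable fun x : Fin (n+1) → ℝ => ∏ i, f i (x i) :=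
      Finset.measurable_prod _ fun i _ => (hf i).comp (measurable_pi_apply i)
    calc ∫⁻ x : Fin (n + 1) → ℝ, ∏ i, f i (x i)
        = ∫⁻ p : ℝ × (Fin n → ℝ), ∏ i, f i ((MeasurableEquiv.piFinSuccAbove (fun _ => ℝ) 0).symm p i)
            ∂((volume : Measure ℝ).prod (Measure.pi fun _ => volume)) := by
          rw [volume_pi, hmp.lintegral_comp hFm]
      _ = ∫⁻ p : ℝ × (Fin n → ℝ), f 0 p.1 * ∏ i : Fin n, f i.succ (p.2 i)
            ∂((volume : Measure ℝ).prod (Measure.pi fun _ => volume)) := by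
          congr 1; funext p
          have : ∀ i, (MeasurableEquiv.piFinSuccAbove (fun _ : Fin (n+1) => ℝ) 0).symm p i
              = (Fin.cons p.1 p.2 : Fin (n+1) → ℝ) i := by
            intro i
            simp [MeasurableEquiv.piFinSuccAbove, Fin.insertNthEquiv, Fin.insertNth_zero]
          simp_rw [this]
          rw [Fin.prod_univ_succ]
          simp
      _ = (∫⁻ t, f 0 t) * ∫⁻ x : Fin n → ℝ, ∏ i : Fin n, f i.succ (x i) ∂(Measure.pi fun _ => volume) := by
          rw [← lintegral_prod_mul (hf 0).aemeasurable
            (Finset.measurable_prod _ fun i _ => (hf i.succ).comp (measurable_pi_apply i)).aemeasurable]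
      _ = ∏ i, ∫⁻ t, f i t := by
          rw [← volume_pi, ih _ fun i => hf i.succ, Fin.prod_univ_succ]

private lemma iInf_quad' {n : ℕ} (i₀ : Fin n) {A : Matrix (Fin n) (Fin n) ℝ} (hA : A.PosDef)
    (hsymm : Aᵀ = A) :
    (⨅ α : {i : Fin n // i ≠ i₀} → ℝ,
      (fun j => if h : j = i₀ then 1 else -α ⟨j, h⟩) ⬝ᵥ
        A *ᵥ (fun j => if h : j = i₀ then 1 else -α ⟨j, h⟩))
      = (A⁻¹ i₀ i₀)⁻¹ := by
  classical
  set r := A⁻¹ i₀ i₀ with hrdef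
  set b : Fin n → ℝ := A⁻¹ *ᵥ Pi.single i₀ 1 with hbdef
  have hdet : IsUnit A.det := isUnit_iff_ne_zero.2 (ne_of_gt hA.det_pos)
  have hAb : A *ᵥ b = Pi.single i₀ 1 := by
    rw [hbdef, Matrix.mulVec_mulVec, Matrix.mul_nonsing_inv _ hdet, Matrix.one_mulVec]
  have hbi₀ : b i₀ = r := by
    simp [hbdef, hrdef, Matrix.mulVec_single]
  have hrpos : 0 < r := by
    have hx : (Pi.single i₀ 1 : Fin n → ℝ) ≠ 0 := by
      intro h
      have := congrFun h i₀
      simp at this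
    have h2 := hA.inv.dotProduct_mulVec_pos hx
    have : star (Pi.single i₀ 1 : Fin n → ℝ) ⬝ᵥ A⁻¹ *ᵥ Pi.single i₀ 1 = r := by
      simp [single_dotProduct, ← hbdef, hbi₀]
    rwa [this] at h2
  have hr0 : r ≠ 0 := ne_of_gt hrpos
  have hbAy : ∀ y : Fin n → ℝ, b ⬝ᵥ A *ᵥ y = y i₀ := by
    intro y
    rw [Matrix.dotProduct_mulVec, ← Matrix.mulVec_transpose, hsymm, hAb,
      single_dotProduct, one_mul]
  have hbAb : b ⬝ᵥ A *ᵥ b = r := by rw [hbAy, hbi₀]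
  have key : ∀ c : Fin n → ℝ, c i₀ = 1 →
      c ⬝ᵥ A *ᵥ c = r⁻¹ + (c - r⁻¹ • b) ⬝ᵥ A *ᵥ (c - r⁻¹ • b) := by
    intro c hc
    have hcAb : c ⬝ᵥ A *ᵥ b = 1 := by rw [hAb, dotProduct_single, hc, mul_one]
    have hbAc : b ⬝ᵥ A *ᵥ c = 1 := by rw [hbAy, hc]
    simp only [Matrix.mulVec_sub, Matrix.mulVec_smul, sub_dotProduct,
      dotProduct_sub, smul_dotProduct, dotProduct_smul,
      hcAb, hbAc, hbAb, smul_eq_mul]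
    field_simp
    ring
  -- the minimizer
  set αs : {i : Fin n // i ≠ i₀} → ℝ := fun i => -(r⁻¹ * b i) with hαs
  have hcv : (fun j => if h : j = i₀ then 1 else -αs ⟨j, h⟩) = r⁻¹ • b := by
    funext j
    by_cases h : j = i₀
    · subst h; simp [hbi₀, inv_mul_cancel₀ hr0]
    · simp [h, hαs]
  have hmin : (fun j => if h : j = i₀ then 1 else -αs ⟨j, h⟩) ⬝ᵥ
      A *ᵥ (fun j => if h : j = i₀ then 1 else -αs ⟨j, h⟩) = r⁻¹ := by
    rw [hcv, key (r⁻¹ • b) (by simp [hbi₀, inv_mul_cancel₀ hr0])]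
    simp
  have hlow : ∀ α : {i : Fin n // i ≠ i₀} → ℝ, r⁻¹ ≤
      (fun j => if h : j = i₀ then 1 else -α ⟨j, h⟩) ⬝ᵥ
        A *ᵥ (fun j => if h : j = i₀ then 1 else -α ⟨j, h⟩) := by
    intro α
    set c : Fin n → ℝ := fun j => if h : j = i₀ then 1 else -α ⟨j, h⟩ with hcdef
    rw [key c (by simp [hcdef])]
    have h0 := hA.posSemidef.dotProduct_mulVec_nonneg (c - r⁻¹ • b)
    simp only [star_trivial] at h0
    linarith
  refine le_antisymm ?_ (le_ciInf hlow)
  have h1 := ciInf_le (f := fun α : {i : Fin n // i ≠ i₀} → ℝ =>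
      (fun j => if h : j = i₀ then 1 else -α ⟨j, h⟩) ⬝ᵥ
        A *ᵥ (fun j => if h : j = i₀ then 1 else -α ⟨j, h⟩))
    ⟨r⁻¹, by rintro x ⟨α, rfl⟩; exact hlow α⟩ αs
  rwa [hmin] at h1

private lemma exists_M' {n : ℕ} (i₀ : Fin n) {A : Matrix (Fin n) (Fin n) ℝ} (hA : A.PosDef)
    (hr : 0 < A⁻¹ i₀ i₀) :
    ∃ M : Matrix (Fin n) (Fin n) ℝ,
      Mᵀ * A * M = 1 ∧
      ∀ j, M i₀ j = if j = i₀ then Real.sqrt (A⁻¹ i₀ i₀) else 0 := by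
  classical
  set r := A⁻¹ i₀ i₀ with hrdef
  set S := CFC.sqrt A with hSdef
  have hSS : S * S = A := CFC.sqrt_mul_sqrt_self A hA.posSemidef.nonneg
  have hSherm : Sᵀ = S := by
    have h := ((CFC.sqrt_nonneg A).posSemidef).1
    simpa [Matrix.IsHermitian, Matrix.conjTranspose_eq_transpose_of_trivial] using h
  have hdetA : A.det ≠ 0 := ne_of_gt hA.det_pos
  have hdetS : IsUnit S.det := by
    refine isUnit_iff_ne_zero.2 fun h => ?_
    apply hdetA
    rw [← hSS, Matrix.det_mul, h, mul_zero]
  set B := S⁻¹ with hBdef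
  have hBsymm : Bᵀ = B := by rw [hBdef, Matrix.transpose_nonsing_inv, hSherm]
  have hBS : B * S = 1 := Matrix.nonsing_inv_mul _ hdetS
  have hSB : S * B = 1 := Matrix.mul_nonsing_inv _ hdetS
  have hBAB : B * A * B = 1 := by
    have h1 : B * A * B = (B * S) * (S * B) := by rw [← hSS]; noncomm_ring
    rw [h1, hBS, hSB, one_mul]
  have hBB : B * B = A⁻¹ := by rw [hBdef, ← Matrix.mul_inv_rev, hSS]
  -- the vector u and the reflection
  set up : EuclideanSpace ℝ (Fin n) :=
    (WithLp.equiv 2 (Fin n → ℝ)).symm (B *ᵥ Pi.single i₀ 1) with hupdef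
  have hup_apply : ∀ i, up i = B i i₀ := by
    intro i
    simp [hupdef, Matrix.mulVec_single]
  have hsum : ∑ i, B i i₀ * B i i₀ = r := by
    have h := congrFun (congrFun hBB i₀) i₀
    rw [Matrix.mul_apply] at h
    rw [hrdef, ← h]
    refine Finset.sum_congr rfl fun k _ => ?_
    have : B i₀ k = B k i₀ := by
      conv_lhs => rw [← hBsymm, Matrix.transpose_apply]
    rw [this]
  have hnu : ‖up‖ = Real.sqrt r := by
    rw [EuclideanSpace.norm_eq]
    congr 1
    rw [← hsum]
    refine Finset.sum_congr rfl fun k _ => ?_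
    rw [hup_apply, Real.norm_eq_abs, sq_abs, sq]
  set v' : EuclideanSpace ℝ (Fin n) := EuclideanSpace.single i₀ (Real.sqrt r) with hv'def
  have hnv : ‖v'‖ = Real.sqrt r := by
    rw [hv'def, EuclideanSpace.norm_single, Real.norm_eq_abs,
      abs_of_nonneg (Real.sqrt_nonneg _)]
  set P := Submodule.reflection (Submodule.span ℝ {up - v'})ᗮ with hPdef
  have hP : P up = v' := Submodule.reflection_sub (by rw [hnu, hnv])
  set Pl : (Fin n → ℝ) →ₗ[ℝ] (Fin n → ℝ) :=
    (WithLp.linearEquiv 2 ℝ (Fin n → ℝ)).toLinearMap ∘ₗ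
      (P.toLinearEquiv.toLinearMap ∘ₗ
        (WithLp.linearEquiv 2 ℝ (Fin n → ℝ)).symm.toLinearMap) with hPldef
  have hPl_apply : ∀ x : Fin n → ℝ, Pl x =
      (WithLp.equiv 2 (Fin n → ℝ)) (P ((WithLp.equiv 2 (Fin n → ℝ)).symm x)) := by
    intro x; rfl
  set Q : Matrix (Fin n) (Fin n) ℝ := LinearMap.toMatrix' Pl with hQdef
  have hQvec : ∀ x : Fin n → ℝ, Q *ᵥ x = Pl x := by
    intro x
    rw [← Matrix.toLin'_apply, hQdef, Matrix.toLin'_toMatrix']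
  have hQel : ∀ a b, Q a b =
      P ((WithLp.equiv 2 (Fin n → ℝ)).symm (fun j' => if j' = b then 1 else 0)) a := by
    intro a b
    rw [hQdef, LinearMap.toMatrix'_apply, show (Pi.single b 1 : Fin n → ℝ) =
      fun j' => if j' = b then 1 else 0 from funext fun j' => Pi.single_apply b 1 j']
    rfl
  have hQQ : Qᵀ * Q = 1 := by
    ext i j
    rw [Matrix.mul_apply, Matrix.one_apply]
    simp only [Matrix.transpose_apply, hQel]
    have hinner := LinearIsometryEquiv.inner_map_map (𝕜 := ℝ) P
      ((WithLp.equiv 2 (Fin n → ℝ)).symm (fun j' => if j' = j then 1 else 0))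
      ((WithLp.equiv 2 (Fin n → ℝ)).symm (fun j' => if j' = i then 1 else 0))
    rw [PiLp.inner_apply, PiLp.inner_apply] at hinner
    simp only [RCLike.inner_apply, conj_trivial, starRingEnd_apply, star_trivial] at hinner
    rw [hinner]
    simp [Finset.sum_ite_eq', eq_comm]
  have hQu : Q *ᵥ (B *ᵥ Pi.single i₀ 1) = Pi.single i₀ (Real.sqrt r) := by
    have h1 : Pl (B *ᵥ Pi.single i₀ 1) =
        (WithLp.equiv 2 (Fin n → ℝ)) (P up) := by rw [hPl_apply]
    rw [hQvec, h1, hP]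
    funext j
    simp [hv'def, EuclideanSpace.single_apply, Pi.single_apply]
  refine ⟨B * Qᵀ, ?_, ?_⟩
  · have hMt : (B * Qᵀ)ᵀ = Q * B := by
      rw [Matrix.transpose_mul, Matrix.transpose_transpose, hBsymm]
    rw [hMt]
    have hQQt : Q * Qᵀ = 1 := mul_eq_one_comm.mp hQQ
    calc Q * B * A * (B * Qᵀ) = Q * (B * A * B) * Qᵀ := by noncomm_ring
      _ = 1 := by rw [hBAB, mul_one, hQQt]
  · intro j
    have h1 : (B * Qᵀ) i₀ j = (Q *ᵥ (B *ᵥ Pi.single i₀ 1)) j := by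
      rw [Matrix.mul_apply, Matrix.mulVec, dotProduct]
      refine Finset.sum_congr rfl fun k _ => ?_
      simp only [Matrix.transpose_apply, Matrix.mulVec_single, mul_one, Pi.smul_apply,
        MulOpposite.op_one, one_smul, Matrix.col_apply]
      have : B i₀ k = B k i₀ := by conv_lhs => rw [← hBsymm, Matrix.transpose_apply]
      rw [this, mul_comm]
    rw [h1, hQu, Pi.single_apply]

end Helpers

open Matrix

theorem stmt_15 {Ω : Type*} [MeasurableSpace Ω] (μ : Measure Ω) [IsProbabilityMeasure μ]
    (n : ℕ) (hn : 0 < n) (Z : Fin n → Ω → ℝ)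
    (hmeas : ∀ i, Measurable (Z i)) (hL2 : ∀ i, MemLp (Z i) 2 μ)
    -- `Z` is a centered Gaussian vector
    (hgauss : ∀ c : Fin n → ℝ, ∃ v : ℝ≥0,
      μ.map (fun ω => ∑ i, c i * Z i ω) = gaussianReal 0 v)
    -- the `Z i` are linearly independent in `L²`, i.e. the covariance matrix is
    -- positive definite
    (hposdef : (Matrix.of fun i j : Fin n => ∫ ω, Z i ω * Z j ω ∂μ).PosDef)
    (g : ℝ → ℝ) (hg : Measurable g) (hg0 : ∀ x, 0 ≤ g x) :
    ∫ v : Fin n → ℝ,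
        g (v ⟨0, hn⟩) *
          Real.exp (-(1 / 2) * ∑ i, ∑ j, v i * v j * ∫ ω, Z i ω * Z j ω ∂μ)
      = (2 * Real.pi) ^ (((n : ℝ) - 1) / 2) *
        (Matrix.of fun i j : Fin n => ∫ ω, Z i ω * Z j ω ∂μ).det ^ (-(1 / 2) : ℝ) *
        ∫ z : ℝ,
          g (z / Real.sqrt
              (⨅ α : {i : Fin n // i ≠ ⟨0, hn⟩} → ℝ,
                ∫ ω, (Z ⟨0, hn⟩ ω - ∑ i : {i : Fin n // i ≠ ⟨0, hn⟩}, α i * Z i ω) ^ 2 ∂μ)) *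
          Real.exp (-z ^ 2 / 2) := by
  classical
  set i₀ : Fin n := ⟨0, hn⟩ with hi₀
  set A : Matrix (Fin n) (Fin n) ℝ := Matrix.of fun i j : Fin n => ∫ ω, Z i ω * Z j ω ∂μ with hA
  have hAapp : ∀ i j, A i j = ∫ ω, Z i ω * Z j ω ∂μ := fun i j => rfl
  have hAsymm : Aᵀ = A := by
    ext i j
    rw [Matrix.transpose_apply, hAapp, hAapp]
    simp_rw [mul_comm]
  have hdetA : (0:ℝ) < A.det := hposdef.det_pos
  have hrpos : 0 < A⁻¹ i₀ i₀ := by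
    have hx : (Pi.single i₀ 1 : Fin n → ℝ) ≠ 0 := by
      intro h; have := congrFun h i₀; simp at this
    have h2 := hposdef.inv.dotProduct_mulVec_pos hx
    simpa [single_dotProduct, Matrix.mulVec_single] using h2
  set r := A⁻¹ i₀ i₀ with hr
  have hr0 : r ≠ 0 := ne_of_gt hrpos
  -- integrability of products
  have hint : ∀ i j, Integrable (fun ω => Z i ω * Z j ω) μ := by
    intro i j
    have h1 := ((hL2 i).add (hL2 j)).integrable_sq
    have h2 := (hL2 i).integrable_sq
    have h3 := (hL2 j).integrable_sq
    have h4 := ((h1.sub h2).sub h3).const_mul (1/2 : ℝ)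
    refine h4.congr ?_
    filter_upwards with ω
    simp only [Pi.sub_apply, Pi.add_apply]
    ring
  -- covariance of linear combinations
  have hq : ∀ c : Fin n → ℝ, (∫ ω, (∑ j, c j * Z j ω)^2 ∂μ) = c ⬝ᵥ A *ᵥ c := by
    intro c
    have h1 : ∀ ω : Ω, (∑ j, c j * Z j ω)^2 = ∑ i, ∑ j, (c i * c j) * (Z i ω * Z j ω) := by
      intro ω
      rw [sq, Finset.sum_mul_sum]
      exact Finset.sum_congr rfl fun i _ => Finset.sum_congr rfl fun j _ => by ring
    simp_rw [h1]
    rw [integral_finset_sum _ fun i _ =>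
      integrable_finset_sum _ fun j _ => (hint i j).const_mul _]
    have h2 : ∀ i, (∫ ω, ∑ j, (c i * c j) * (Z i ω * Z j ω) ∂μ)
        = ∑ j, (c i * c j) * ∫ ω, Z i ω * Z j ω ∂μ := by
      intro i
      rw [integral_finset_sum _ fun j _ => (hint i j).const_mul _]
      exact Finset.sum_congr rfl fun j _ => integral_const_mul _ _
    simp_rw [h2]
    simp only [dotProduct, Matrix.mulVec, Finset.mul_sum]
    exact Finset.sum_congr rfl fun i _ => Finset.sum_congr rfl fun j _ => by
      rw [hAapp]; ring
  -- the infimum is r⁻¹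
  have hiInf : (⨅ α : {i : Fin n // i ≠ i₀} → ℝ,
      ∫ ω, (Z i₀ ω - ∑ i : {i : Fin n // i ≠ i₀}, α i * Z i ω) ^ 2 ∂μ) = r⁻¹ := by
    rw [hr, ← iInf_quad' i₀ hposdef hAsymm]
    refine iInf_congr fun α => ?_
    have hfun : ∀ ω, Z i₀ ω - ∑ i : {i : Fin n // i ≠ i₀}, α i * Z i ω
        = ∑ j, (if h : j = i₀ then 1 else -α ⟨j, h⟩) * Z j ω := by
      intro ω
      rw [Fintype.sum_eq_add_sum_compl i₀
        (fun j => (if h : j = i₀ then (1:ℝ) else -α ⟨j, h⟩) * Z j ω)]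
      rw [dif_pos rfl, one_mul]
      have hs : ∑ j ∈ ({i₀}ᶜ : Finset (Fin n)),
          (if h : j = i₀ then (1:ℝ) else -α ⟨j, h⟩) * Z j ω
          = ∑ j : {i : Fin n // i ≠ i₀},
              (if h : (j:Fin n) = i₀ then (1:ℝ) else -α ⟨j, h⟩) * Z (j:Fin n) ω :=
        Finset.sum_subtype _ (by intro x; simp) _
      rw [hs, sub_eq_add_neg]
      congr 1
      rw [← Finset.sum_neg_distrib]
      refine Finset.sum_congr rfl fun j _ => ?_
      simp only [dif_neg j.2, Subtype.coe_eta, neg_mul]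
    simp_rw [hfun]
    exact hq _
  -- the matrix M
  obtain ⟨M, hMAM, hMrow⟩ := exists_M' i₀ hposdef hrpos
  have hdetM2 : M.det ^ 2 = A.det⁻¹ := by
    have h := congrArg Matrix.det hMAM
    rw [Matrix.det_mul, Matrix.det_mul, Matrix.det_transpose, Matrix.det_one] at h
    have h2 : M.det ^ 2 * A.det = 1 := by rw [sq]; linear_combination h
    exact eq_inv_of_mul_eq_one_left h2
  have hdetM0 : M.det ≠ 0 := by
    intro h
    have h1 : (A.det)⁻¹ = (0:ℝ) := by rw [← hdetM2, h]; ring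
    rw [inv_eq_zero] at h1
    exact ne_of_gt hdetA h1
  have habsdet : |M.det| = A.det ^ (-(1/2) : ℝ) := by
    rw [← Real.sqrt_sq_eq_abs, hdetM2, Real.sqrt_eq_rpow,
      Real.inv_rpow hdetA.le, ← Real.rpow_neg hdetA.le]
  -- quadratic form identities
  have hdd : ∀ v : Fin n → ℝ,
      (∑ i, ∑ j, v i * v j * ∫ ω, Z i ω * Z j ω ∂μ) = v ⬝ᵥ A *ᵥ v := by
    intro v
    simp only [dotProduct, Matrix.mulVec, Finset.mul_sum]
    exact Finset.sum_congr rfl fun i _ => Finset.sum_congr rfl fun j _ => by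
      rw [hAapp]; ring
  have hquadM : ∀ w : Fin n → ℝ, (M *ᵥ w) ⬝ᵥ A *ᵥ (M *ᵥ w) = ∑ i, w i ^ 2 := by
    intro w
    rw [Matrix.mulVec_mulVec, Matrix.dotProduct_mulVec, ← Matrix.mulVec_transpose,
      Matrix.mulVec_mulVec]
    have h1 : (A * M)ᵀ * M = 1 := by
      rw [Matrix.transpose_mul, hAsymm]
      exact hMAM
    rw [h1, Matrix.one_mulVec]
    simp [dotProduct, sq]
  have hMi₀ : ∀ w : Fin n → ℝ, (M *ᵥ w) i₀ = Real.sqrt r * w i₀ := by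
    intro w
    show ∑ j, M i₀ j * w j = Real.sqrt r * w i₀
    calc ∑ j, M i₀ j * w j
        = ∑ j, (if j = i₀ then Real.sqrt r else 0) * w j :=
          Finset.sum_congr rfl fun j _ => by rw [hMrow j]
      _ = Real.sqrt r * w i₀ := by simp [ite_mul]
  -- the integrand
  set f : (Fin n → ℝ) → ℝ := fun v => g (v i₀) * Real.exp (-(1/2) * (v ⬝ᵥ A *ᵥ v)) with hf
  have hqm : Measurable fun v : Fin n → ℝ => v ⬝ᵥ A *ᵥ v := by
    have hrw : (fun v : Fin n → ℝ => v ⬝ᵥ A *ᵥ v)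
        = fun v => ∑ i, v i * ∑ j, A i j * v j := by
      funext v
      simp [dotProduct, Matrix.mulVec]
    rw [hrw]
    exact Finset.measurable_sum _ fun i _ => (measurable_pi_apply i).mul
      (Finset.measurable_sum _ fun j _ => by fun_prop)
  have hfm : Measurable f := by
    apply Measurable.mul (hg.comp (measurable_pi_apply i₀))
    exact Real.measurable_exp.comp (hqm.const_mul _)
  have hf0 : ∀ v, 0 ≤ f v := fun v => mul_nonneg (hg0 _) (Real.exp_pos _).le
  have hLHS : (∫ v : Fin n → ℝ, g (v i₀) *
      Real.exp (-(1 / 2) * ∑ i, ∑ j, v i * v j * ∫ ω, Z i ω * Z j ω ∂μ)) = ∫ v, f v := by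
    congr 1
    funext v
    rw [hf, hdd v]
  -- change of variables
  have hM_meas : Measurable (Matrix.toLin' M) :=
    (LinearMap.continuous_of_finiteDimensional _).measurable
  have hofm : Measurable fun v => ENNReal.ofReal (f v) := ENNReal.measurable_ofReal.comp hfm
  have hstep1 : ∫ v, f v = (∫⁻ v, ENNReal.ofReal (f v)).toReal :=
    integral_eq_lintegral_of_nonneg_ae (Filter.Eventually.of_forall hf0)
      hfm.aestronglyMeasurable
  have hstep2 : (∫⁻ v, ENNReal.ofReal (f v))
      = ENNReal.ofReal |M.det| * ∫⁻ w, ENNReal.ofReal (f (M *ᵥ w)) := by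
    have h3 : (∫⁻ w, ENNReal.ofReal (f (M *ᵥ w)))
        = ∫⁻ v, ENNReal.ofReal (f v) ∂(Measure.map (Matrix.toLin' M) volume) := by
      rw [lintegral_map hofm hM_meas]
      exact lintegral_congr fun w => by rw [Matrix.toLin'_apply]
    have h4 : ENNReal.ofReal |M.det| * (∫⁻ w, ENNReal.ofReal (f (M *ᵥ w)))
        = ∫⁻ v, ENNReal.ofReal (f v) := by
      rw [h3, Real.map_matrix_volume_pi_eq_smul_volume_pi hdetM0, lintegral_smul_measure, smul_eq_mul,
        abs_inv, ENNReal.ofReal_inv_of_pos (abs_pos.mpr hdetM0), ← mul_assoc,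
        ENNReal.mul_inv_cancel (ENNReal.ofReal_pos.mpr (abs_pos.mpr hdetM0)).ne'
          ENNReal.ofReal_ne_top, one_mul]
    exact h4.symm
  -- factorization of the integrand
  set h : Fin n → ℝ → ℝ :=
    fun i t => (if i = i₀ then g (Real.sqrt r * t) else 1) * Real.exp (-(1/2) * t^2) with hhdef
  have hfM : ∀ w : Fin n → ℝ, f (M *ᵥ w) = ∏ i, h i (w i) := by
    intro w
    rw [hf]
    show g ((M *ᵥ w) i₀) * Real.exp (-(1/2) * ((M *ᵥ w) ⬝ᵥ A *ᵥ (M *ᵥ w))) = _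
    rw [hquadM, hMi₀]
    have hexp : Real.exp (-(1/2) * ∑ i, w i ^ 2) = ∏ i, Real.exp (-(1/2) * w i ^ 2) := by
      rw [Finset.mul_sum, Real.exp_sum]
    rw [hexp, hhdef]
    rw [Finset.prod_mul_distrib]
    congr 1
    rw [Finset.prod_ite_eq' Finset.univ i₀ (fun i => g (Real.sqrt r * w i))]
    simp
  have hhm : ∀ i, Measurable fun t => ENNReal.ofReal (h i t) := by
    intro i
    apply ENNReal.measurable_ofReal.comp
    apply Measurable.mul
    · by_cases hi : i = i₀
      · simpa [hhdef, hi, Function.comp_def] using hg.comp (measurable_const_mul (Real.sqrt r))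
      · simpa [hhdef, hi] using measurable_const
    · exact Real.measurable_exp.comp ((measurable_id.pow_const 2).const_mul _)
  have hh0 : ∀ i t, 0 ≤ h i t := by
    intro i t
    apply mul_nonneg _ (Real.exp_pos _).le
    by_cases hi : i = i₀ <;> simp [hhdef, hi, hg0]
  have hstep3 : (∫⁻ w : Fin n → ℝ, ENNReal.ofReal (f (M *ᵥ w)))
      = ∏ i, ∫⁻ t, ENNReal.ofReal (h i t) := by
    rw [← lintegral_fin_prod' _ hhm]
    refine lintegral_congr fun w => ?_
    rw [hfM w, ENNReal.ofReal_prod_of_nonneg fun i _ => hh0 i (w i)]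
  -- one-dimensional integrals
  have hgauss1 : (∫⁻ t : ℝ, ENNReal.ofReal (Real.exp (-(1/2) * t^2)))
      = ENNReal.ofReal (Real.sqrt (2 * Real.pi)) := by
    rw [← ofReal_integral_eq_lintegral_ofReal
      (integrable_exp_neg_mul_sq (by norm_num : (0:ℝ) < 1/2))
      (Filter.Eventually.of_forall fun t => (Real.exp_pos _).le)]
    rw [integral_gaussian, show Real.pi / (1/2) = 2 * Real.pi by ring]
  have hstep4 : (∏ i, ∫⁻ t, ENNReal.ofReal (h i t))
      = (∫⁻ t : ℝ, ENNReal.ofReal (g (Real.sqrt r * t) * Real.exp (-(1/2) * t^2)))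
        * (ENNReal.ofReal (Real.sqrt (2 * Real.pi))) ^ (n - 1) := by
    rw [← Finset.mul_prod_erase Finset.univ _ (Finset.mem_univ i₀)]
    have hfac : ∀ i ∈ Finset.univ.erase i₀, (∫⁻ t, ENNReal.ofReal (h i t))
        = ENNReal.ofReal (Real.sqrt (2 * Real.pi)) := by
      intro i hi
      have hne : i ≠ i₀ := (Finset.mem_erase.mp hi).1
      rw [← hgauss1]
      refine lintegral_congr fun t => ?_
      rw [hhdef]
      simp [hne]
    rw [Finset.prod_congr rfl hfac, Finset.prod_const,
      Finset.card_erase_of_mem (Finset.mem_univ _), Finset.card_univ, Fintype.card_fin]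
    congr 1
  have hgcm : Measurable fun t : ℝ => g (Real.sqrt r * t) * Real.exp (-(1/2) * t^2) :=
    (hg.comp (measurable_const_mul (Real.sqrt r))).mul
      (Real.measurable_exp.comp ((measurable_id.pow_const 2).const_mul _))
  have hJreal : (∫⁻ t : ℝ, ENNReal.ofReal (g (Real.sqrt r * t) * Real.exp (-(1/2) * t^2))).toReal
      = ∫ t : ℝ, g (Real.sqrt r * t) * Real.exp (-(1/2) * t^2) :=
    (integral_eq_lintegral_of_nonneg_ae
      (Filter.Eventually.of_forall fun t => mul_nonneg (hg0 _) (Real.exp_pos _).le)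
      hgcm.aestronglyMeasurable).symm
  have htotal : ∫ v, f v = |M.det| * ((Real.sqrt (2*Real.pi))^(n-1) *
      ∫ t : ℝ, g (Real.sqrt r * t) * Real.exp (-(1/2) * t^2)) := by
    rw [hstep1, hstep2, hstep3, hstep4]
    rw [ENNReal.toReal_mul, ENNReal.toReal_mul, ENNReal.toReal_pow,
      ENNReal.toReal_ofReal (abs_nonneg _), ENNReal.toReal_ofReal (Real.sqrt_nonneg _), hJreal]
    ring
  have hRHSint : (∫ z : ℝ, g (z / Real.sqrt r⁻¹) * Real.exp (-z^2/2))
      = ∫ t : ℝ, g (Real.sqrt r * t) * Real.exp (-(1/2)*t^2) := by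
    congr 1
    funext z
    rw [Real.sqrt_inv, div_eq_mul_inv, inv_inv, mul_comm z (Real.sqrt r), show -z^2/2 = -(1/2)*z^2 by ring]
  have hpow : (Real.sqrt (2*Real.pi))^(n-1) = (2*Real.pi) ^ (((n:ℝ)-1)/2) := by
    rw [Real.sqrt_eq_rpow, ← Real.rpow_natCast ((2*Real.pi) ^ ((1:ℝ)/2)) (n-1),
      ← Real.rpow_mul (by positivity)]
    congr 1
    rw [Nat.cast_sub hn]
    push_cast
    ring
  rw [hiInf, hLHS, htotal, hRHSint, ← hpow, ← habsdet]
  ring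
end
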